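/- Let (X,d) be a compact metric space and f: X → X continuous. (X,f) satisfies property P_e (every nonempty closed internally chain transitive set A admits a full trajectory ⟨x_i⟩_{i∈ℤ} with α(⟨x_i⟩) = ω(⟨x_i⟩) = A) if and only if (X,f) has γ-restricted two-sided orbital limit shadowing. -/

import Mathlib

open Filter Metric Topology Set

def omegaSeq {X : Type*} [MetricSpace X] (u : ℕ → X) : Set X :=
  ⋂ M : ℕ, closure (u '' Set.Ioi M)

def omegaPt {X : Type*} [MetricSpace X] (f : X → X) (x : X) : Set X :=
  omegaSeq (fun n => f^[n] x)

def omegaZ {X : Type*} [MetricSpace X] (u : ℤ → X) : Set X :=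
  ⋂ M : ℕ, closure (u '' {n : ℤ | (M : ℤ) < n})

def alphaZ {X : Type*} [MetricSpace X] (u : ℤ → X) : Set X :=
  ⋂ M : ℕ, closure (u '' {n : ℤ | n < -(M : ℤ)})

/-- `A` is internally chain transitive for `f`. -/
def chainTransitive {X : Type*} [MetricSpace X] (f : X → X) (A : Set X) : Prop :=
  ∀ a ∈ A, ∀ b ∈ A, ∀ δ > (0:ℝ), ∃ N : ℕ, 1 ≤ N ∧ ∃ y : ℕ → X,
    y 0 = a ∧ y N = b ∧ (∀ i ≤ N, y i ∈ A) ∧ ∀ i < N, dist (f (y i)) (y (i+1)) < δ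

/-- `u` is a full trajectory of `f`. -/
def fullTraj {X : Type*} (f : X → X) (u : ℤ → X) : Prop := ∀ i : ℤ, f (u i) = u (i + 1)

/-- `u` is a two-sided asymptotic pseudo-orbit of `f`. -/
def twoSidedAsymptotic {X : Type*} [MetricSpace X] (f : X → X) (u : ℤ → X) : Prop :=
  Filter.Tendsto (fun i : ℤ => dist (f (u i)) (u (i + 1))) Filter.atTop (nhds 0) ∧
  Filter.Tendsto (fun i : ℤ => dist (f (u i)) (u (i + 1))) Filter.atBot (nhds 0)

/-- The γ-limit set of a point. -/
def gammaLimit {X : Type*} [MetricSpace X] (f : X → X) (x : X) : Set X :=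
  {y | y ∈ omegaPt f x ∧ ∃ (ys : ℕ → X) (ns : ℕ → ℕ), StrictMono ns ∧
    (∀ i, f^[ns i] (ys i) = x) ∧ Filter.Tendsto ys Filter.atTop (nhds y)}



lemma concat_exists {X : Type*} (N : ℕ → ℕ) (hN : ∀ n, 1 ≤ N n) (c : ℕ → ℕ → X)
    (hc : ∀ n, c n (N n) = c (n+1) 0) :
    ∃ (p : ℕ → X) (S : ℕ → ℕ), S 0 = 0 ∧ (∀ n, S (n+1) = S n + N n) ∧
      (∀ n i, i ≤ N n → p (S n + i) = c n i) ∧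
      (∀ K m, S K ≤ m → ∃ n, K ≤ n ∧ S n ≤ m ∧ m < S (n+1)) := by
  classical
  set S : ℕ → ℕ := fun n => Nat.rec 0 (fun k acc => acc + N k) n with hS
  have hS0 : S 0 = 0 := rfl
  have hSsucc : ∀ n, S (n+1) = S n + N n := fun n => rfl
  have hSge : ∀ n, n ≤ S n := by
    intro n; induction n with
    | zero => simp [hS0]
    | succ k ih => have := hN k; rw [hSsucc]; omega
  have hSmono : Monotone S := monotone_nat_of_le_succ (fun n => by rw [hSsucc]; omega)
  set idx : ℕ → ℕ := fun m => Nat.findGreatest (fun n => S n ≤ m) m with hidx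
  have hidx1 : ∀ m, S (idx m) ≤ m := by
    intro m
    exact Nat.findGreatest_spec (P := fun n => S n ≤ m) (m := 0) (Nat.zero_le m) (by show S 0 ≤ m; rw [hS0]; exact Nat.zero_le m)
  have hidx2 : ∀ m, m < S (idx m + 1) := by
    intro m
    by_contra h
    push_neg at h
    rcases le_or_gt (idx m + 1) m with hle | hlt
    · exact Nat.findGreatest_is_greatest (lt_add_one _) hle h
    · have := hSge (idx m + 1); omega
  have hloc : ∀ K m, S K ≤ m → ∃ n, K ≤ n ∧ S n ≤ m ∧ m < S (n+1) := by
    intro K m hKm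
    exact ⟨idx m, Nat.le_findGreatest (le_trans (hSge K) hKm) hKm, hidx1 m, hidx2 m⟩
  have hidx_eq : ∀ n i, i < N n → idx (S n + i) = n := by
    intro n i hi
    have h1 : n ≤ idx (S n + i) :=
      Nat.le_findGreatest (le_trans (hSge n) (Nat.le_add_right _ _)) (Nat.le_add_right _ _)
    have h2 : S n + i < S (n+1) := by rw [hSsucc]; omega
    by_contra hne
    have hgt : n < idx (S n + i) := lt_of_le_of_ne h1 (Ne.symm hne)
    have h3 : S (n + 1) ≤ S (idx (S n + i)) := hSmono hgt
    have h4 := hidx1 (S n + i)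
    omega
  refine ⟨fun m => c (idx m) (m - S (idx m)), S, hS0, hSsucc, ?_, hloc⟩
  intro n i hi
  rcases lt_or_eq_of_le hi with hi' | hi'
  · simp only [hidx_eq n i hi', Nat.add_sub_cancel_left]
  · subst hi'
    have h0 : S n + N n = S (n+1) + 0 := by rw [hSsucc]; omega
    rw [h0]
    show c (idx (S (n+1) + 0)) (S (n+1) + 0 - S (idx (S (n+1) + 0))) = c n (N n)
    rw [hidx_eq (n+1) 0 (hN (n+1))]
    simp [hc n]

section helpers

variable {X : Type*} [MetricSpace X]

lemma omegaZ_isClosed (u : ℤ → X) : IsClosed (omegaZ u) :=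
  isClosed_iInter fun _ => isClosed_closure

lemma alphaZ_isClosed (u : ℤ → X) : IsClosed (alphaZ u) :=
  isClosed_iInter fun _ => isClosed_closure

lemma omegaZ_nonempty [CompactSpace X] (u : ℤ → X) : (omegaZ u).Nonempty := by
  apply IsCompact.nonempty_iInter_of_sequence_nonempty_isCompact_isClosed
  · intro i
    refine closure_mono (image_mono (fun n hn => ?_))
    simp only [Set.mem_setOf_eq] at *
    push_cast at hn ⊢
    omega
  · intro i
    exact ⟨u (i+1), subset_closure ⟨i+1, by simp, rfl⟩⟩
  · exact isClosed_closure.isCompact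
  · intro i; exact isClosed_closure

lemma omegaZ_tail [CompactSpace X] (u : ℤ → X) {ε : ℝ} (hε : 0 < ε) :
    ∃ M : ℕ, ∀ n : ℤ, (M : ℤ) < n → ∃ a ∈ omegaZ u, dist (u n) a < ε := by
  by_contra h
  push_neg at h
  set C : Set X := {y : X | ∀ a ∈ omegaZ u, ε ≤ dist y a} with hC
  have hCclosed : IsClosed C := by
    have : C = ⋂ a ∈ omegaZ u, {y : X | ε ≤ dist y a} := by
      ext y; simp [hC]
    rw [this]
    exact isClosed_biInter fun a _ =>
      isClosed_le continuous_const (continuous_id.dist continuous_const)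
  set Z : ℕ → Set X := fun M => closure (u '' ({n : ℤ | (M : ℤ) < n} ∩ {n : ℤ | u n ∈ C}))
  have hZne : ∀ M, (Z M).Nonempty := by
    intro M
    obtain ⟨n, hn, hn2⟩ := h M
    refine ⟨u n, subset_closure ⟨n, ⟨hn, ?_⟩, rfl⟩⟩
    intro a ha
    exact hn2 a ha
  have hx : (⋂ M, Z M).Nonempty := by
    apply IsCompact.nonempty_iInter_of_sequence_nonempty_isCompact_isClosed
    · intro i
      exact closure_mono (image_mono (fun n hn => ⟨by have := hn.1; simp only [Set.mem_setOf_eq] at *; omega, hn.2⟩))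
    · exact hZne
    · exact isClosed_closure.isCompact
    · intro i; exact isClosed_closure
  obtain ⟨x, hx⟩ := hx
  have hxo : x ∈ omegaZ u := by
    refine Set.mem_iInter.mpr fun M => ?_
    have := Set.mem_iInter.mp hx M
    exact closure_mono (image_mono (inter_subset_left)) this
  have hxC : x ∈ C := by
    have h1 : Z 0 ⊆ closure C := closure_mono (fun y hy => by
      obtain ⟨n, hn, rfl⟩ := hy; exact hn.2)
    have := h1 (Set.mem_iInter.mp hx 0)
    rwa [hCclosed.closure_eq] at this
  have := hxC x hxo
  simp at this
  linarith

lemma omegaZ_chainTransitive [CompactSpace X] {f : X → X} (hf : Continuous f) (u : ℤ → X)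
    (hu : Tendsto (fun i : ℤ => dist (f (u i)) (u (i + 1))) atTop (nhds 0)) :
    chainTransitive f (omegaZ u) := by
  intro a ha b hb δ hδ
  have hδ4 : 0 < δ / 4 := by linarith
  obtain ⟨ε0, hε0, hunif⟩ := Metric.uniformContinuous_iff.mp
    (CompactSpace.uniformContinuous_of_continuous hf) (δ/4) hδ4
  set ε : ℝ := min ε0 (δ/4) with hεdef
  have hε : 0 < ε := lt_min hε0 hδ4
  -- eventual small jumps
  have h1 : ∀ᶠ i : ℤ in atTop, dist (f (u i)) (u (i+1)) < δ/4 := by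
    have := Metric.tendsto_nhds.mp hu (δ/4) hδ4
    filter_upwards [this] with i hi
    rwa [Real.dist_eq, sub_zero, abs_of_nonneg dist_nonneg] at hi
  obtain ⟨M₁, hM₁⟩ := eventually_atTop.mp h1
  obtain ⟨M₂, hM₂⟩ := omegaZ_tail u hε
  set M : ℕ := max M₂ M₁.toNat with hM
  -- find n₁ near a
  have haM := Set.mem_iInter.mp ha M
  obtain ⟨x₁, ⟨n₁, hn₁, rfl⟩, hd₁⟩ := Metric.mem_closure_iff.mp haM ε hε
  have hbM := Set.mem_iInter.mp hb (n₁.toNat)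
  obtain ⟨x₂, ⟨n₂, hn₂, rfl⟩, hd₂⟩ := Metric.mem_closure_iff.mp hbM ε hε
  simp only [Set.mem_setOf_eq] at hn₁ hn₂
  have hn₁M₂ : (M₂ : ℤ) < n₁ := by
    have h0 : (M₂ : ℤ) ≤ (M : ℤ) := by exact_mod_cast le_max_left M₂ M₁.toNat
    omega
  have hn₁M₁ : M₁ ≤ n₁ := by
    have h0 : M₁ ≤ (M₁.toNat : ℤ) := Int.self_le_toNat _
    have : ((M₁.toNat : ℕ) : ℤ) ≤ (M : ℤ) := by exact_mod_cast le_max_right M₂ M₁.toNat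
    omega
  have h12 : n₁ < n₂ := by have := Int.self_le_toNat n₁; omega
  set N : ℕ := (n₂ - n₁).toNat with hN
  have hNc : (N : ℤ) = n₂ - n₁ := Int.toNat_of_nonneg (by omega)
  have hN1 : 1 ≤ N := by omega
  -- choice of intermediate points
  have hch : ∀ i : ℕ, ∃ a' ∈ omegaZ u, dist (u (n₁ + i)) a' < ε := by
    intro i
    exact hM₂ (n₁ + i) (by omega)
  choose c hcmem hcd using hch
  set y : ℕ → X := fun i => if i = 0 then a else if i = N then b else c i with hy
  have hkey : ∀ i ≤ N, y i ∈ omegaZ u ∧ dist (u (n₁ + i)) (y i) < ε := by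
    intro i hi
    by_cases h0 : i = 0
    · subst h0
      simp only [hy, if_pos rfl]
      exact ⟨ha, by push_cast; rw [add_zero, dist_comm]; exact hd₁⟩
    by_cases hNe : i = N
    · subst hNe
      simp only [hy, if_neg h0, if_pos rfl]
      have : n₁ + (N : ℤ) = n₂ := by omega
      rw [this, dist_comm]
      exact ⟨hb, hd₂⟩
    · simp only [hy, if_neg h0, if_neg hNe]
      exact ⟨hcmem i, hcd i⟩
  refine ⟨N, hN1, y, by simp [hy], by simp only [hy]; rw [if_neg (by omega)]; simp, fun i hi => (hkey i hi).1, ?_⟩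
  intro i hi
  have hk1 := hkey i (le_of_lt hi)
  have hk2 := hkey (i+1) hi
  have hjump : dist (f (u (n₁ + i))) (u (n₁ + i + 1)) < δ/4 := hM₁ (n₁ + i) (by omega)
  have hfd : dist (f (y i)) (f (u (n₁ + i))) < δ/4 := by
    apply hunif
    rw [dist_comm]
    exact lt_of_lt_of_le hk1.2 (min_le_left _ _)
  have hcast : (n₁ + ((i : ℕ) + 1 : ℕ) : ℤ) = n₁ + i + 1 := by push_cast; ring
  have h3 : dist (u (n₁ + i + 1)) (y (i+1)) < ε := by
    have := hk2.2
    rwa [hcast] at this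
  have htri : dist (f (y i)) (y (i+1)) ≤
      dist (f (y i)) (f (u (n₁ + i))) + dist (f (u (n₁ + i))) (u (n₁ + i + 1))
        + dist (u (n₁ + i + 1)) (y (i+1)) := dist_triangle4 _ _ _ _
  have hεle : ε ≤ δ/4 := min_le_right _ _
  linarith

end helpers

section construction
variable {X : Type*} [MetricSpace X] [CompactSpace X]

lemma exists_dense_seq_in (A : Set X) (hA : IsClosed A) (hne : A.Nonempty) :
    ∃ e : ℕ → X, (∀ j, e j ∈ A) ∧ A ⊆ closure (Set.range e) := by
  have hc : CompactSpace ↥A := isCompact_iff_compactSpace.mp hA.isCompact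
  have : Nonempty ↥A := hne.to_subtype
  obtain ⟨v, hv⟩ := TopologicalSpace.exists_dense_seq ↥A
  refine ⟨fun j => (v j : X), fun j => (v j).2, ?_⟩
  intro a ha
  have h2 : (⟨a, ha⟩ : ↥A) ∈ closure (Set.range v) := by
    rw [hv.closure_range]; trivial
  refine map_mem_closure continuous_subtype_val h2 ?_
  rintro x ⟨j, rfl⟩
  exact ⟨j, rfl⟩

lemma exists_good_pseudo_orbit (f : X → X) (A : Set X) (hne : A.Nonempty)
    (hcl : IsClosed A) (hct : chainTransitive f A) :
    ∃ u : ℤ → X, twoSidedAsymptotic f u ∧ alphaZ u = A ∧ omegaZ u = A := by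
  classical
  obtain ⟨e, heA, hedense⟩ := exists_dense_seq_in A hcl hne
  set t : ℕ → X := fun n => e (Nat.unpair n).2 with htdef
  have ht : ∀ n, t n ∈ A := fun n => heA _
  have hpos : ∀ n : ℕ, (0:ℝ) < 1/(n+1) := fun n => by positivity
  choose N hN1 y hy0 hyN hymem hyj using
    fun n : ℕ => hct (t n) (ht n) (t (n+1)) (ht (n+1)) (1/(n+1)) (hpos n)
  choose N' hN1' y' hy0' hyN' hymem' hyj' using
    fun n : ℕ => hct (t (n+1)) (ht (n+1)) (t n) (ht n) (1/(n+1)) (hpos n)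
  obtain ⟨p, S, hS0, hSsucc, hp, hloc⟩ := concat_exists N hN1 (fun n i => y n i)
    (fun n => by rw [hyN n, hy0 (n+1)])
  obtain ⟨r, S', hS0', hSsucc', hr, hloc'⟩ := concat_exists N' hN1'
    (fun n i => y' n (N' n - i))
    (fun n => by rw [Nat.sub_self, hy0' n, Nat.sub_zero, hyN' (n+1)])
  have hSge : ∀ K, K ≤ S K := by
    intro K; induction K with
    | zero => omega
    | succ k ih => have := hN1 k; rw [hSsucc]; omega
  have hSge' : ∀ K, K ≤ S' K := by
    intro K; induction K with
    | zero => omega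
    | succ k ih => have := hN1' k; rw [hSsucc']; omega
  -- values in A
  have hpmem : ∀ m, p m ∈ A := by
    intro m
    obtain ⟨n, -, h1, h2⟩ := hloc 0 m (by rw [hS0]; exact Nat.zero_le m)
    rw [hSsucc] at h2
    have hi : m - S n < N n := by omega
    have := hp n (m - S n) (le_of_lt hi)
    rw [show S n + (m - S n) = m by omega] at this
    rw [this]
    exact hymem n _ (le_of_lt hi)
  have hrmem : ∀ m, r m ∈ A := by
    intro m
    obtain ⟨n, -, h1, h2⟩ := hloc' 0 m (by rw [hS0']; exact Nat.zero_le m)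
    rw [hSsucc'] at h2
    have hi : m - S' n < N' n := by omega
    have := hr n (m - S' n) (le_of_lt hi)
    rw [show S' n + (m - S' n) = m by omega] at this
    rw [this]
    exact hymem' n _ (Nat.sub_le _ _)
  -- endpoints
  have hpt : ∀ n, p (S n) = t n := by
    intro n
    have := hp n 0 (Nat.zero_le _)
    rw [Nat.add_zero] at this
    rw [this]; exact hy0 n
  have hrt : ∀ n, r (S' n) = t n := by
    intro n
    have := hr n 0 (Nat.zero_le _)
    rw [Nat.add_zero] at this
    rw [this]
    simp only [Nat.sub_zero]
    exact hyN' n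
  -- jumps
  have hpj : ∀ K m, S K ≤ m → dist (f (p m)) (p (m+1)) < 1/(K+1) := by
    intro K m hKm
    obtain ⟨n, hKn, h1, h2⟩ := hloc K m hKm
    rw [hSsucc] at h2
    have hiN : m - S n < N n := by omega
    have e1 : p m = y n (m - S n) := by
      have := hp n (m - S n) (le_of_lt hiN)
      rwa [show S n + (m - S n) = m by omega] at this
    have e2 : p (m+1) = y n (m - S n + 1) := by
      have := hp n (m - S n + 1) hiN
      rwa [show S n + (m - S n + 1) = m + 1 by omega] at this
    rw [e1, e2]
    calc dist (f (y n (m - S n))) (y n (m - S n + 1)) < 1/(n+1) := hyj n _ hiN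
      _ ≤ 1/(K+1) := by
          apply one_div_le_one_div_of_le
          · positivity
          · linarith [(Nat.cast_le (α := ℝ)).mpr hKn]
  have hrj : ∀ K m, S' K ≤ m → dist (f (r (m+1))) (r m) < 1/(K+1) := by
    intro K m hKm
    obtain ⟨n, hKn, h1, h2⟩ := hloc' K m hKm
    rw [hSsucc'] at h2
    have hiN : m - S' n < N' n := by omega
    set i := m - S' n with hidef
    have e1 : r m = y' n (N' n - i) := by
      have := hr n i (le_of_lt hiN)
      rwa [show S' n + i = m by omega] at this
    have e2 : r (m+1) = y' n (N' n - (i+1)) := by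
      have := hr n (i+1) hiN
      rwa [show S' n + (i+1) = m + 1 by omega] at this
    rw [e1, e2]
    have hj2 : N' n - i = (N' n - (i+1)) + 1 := by omega
    rw [hj2]
    calc dist (f (y' n (N' n - (i+1)))) (y' n (N' n - (i+1) + 1)) < 1/(n+1) :=
          hyj' n _ (by omega)
      _ ≤ 1/(K+1) := by
          apply one_div_le_one_div_of_le
          · positivity
          · linarith [(Nat.cast_le (α := ℝ)).mpr hKn]
  -- the two-sided sequence
  set u : ℤ → X := fun m => if 0 ≤ m then p m.toNat else r (-m).toNat with hudef
  have hu_nonneg : ∀ m : ℤ, 0 ≤ m → u m = p m.toNat := by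
    intro m hm; simp [hudef, hm]
  have hu_neg : ∀ m : ℤ, m < 0 → u m = r (-m).toNat := by
    intro m hm; simp [hudef, not_le.mpr hm]
  have humem : ∀ m, u m ∈ A := by
    intro m
    rcases le_or_gt 0 m with h | h
    · rw [hu_nonneg m h]; exact hpmem _
    · rw [hu_neg m h]; exact hrmem _
  have hp0r0 : p 0 = r 0 := by
    have h1 : p 0 = t 0 := by have := hpt 0; rwa [hS0] at this
    have h2 : r 0 = t 0 := by have := hrt 0; rwa [hS0'] at this
    rw [h1, h2]
  have hu_neg_succ : ∀ i : ℤ, i ≤ -1 →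
      u i = r (-i).toNat ∧ u (i+1) = r ((-i).toNat - 1) := by
    intro i hi
    refine ⟨hu_neg i (by omega), ?_⟩
    rcases lt_or_eq_of_le (show i + 1 ≤ 0 by omega) with h | h
    · rw [hu_neg (i+1) h]
      congr 1
      omega
    · rw [h, hu_nonneg 0 le_rfl]
      have : (-i).toNat - 1 = 0 := by omega
      rw [this]
      simpa using hp0r0
  -- asymptotic
  have hasym : twoSidedAsymptotic f u := by
    constructor
    · rw [Metric.tendsto_nhds]
      intro ε hε
      obtain ⟨K, hK⟩ := exists_nat_one_div_lt hε
      rw [eventually_atTop]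
      refine ⟨(S K : ℤ), fun i hi => ?_⟩
      have hi0 : 0 ≤ i := le_trans (by positivity) hi
      rw [hu_nonneg i hi0, hu_nonneg (i+1) (by omega)]
      rw [show (i+1).toNat = i.toNat + 1 by omega]
      rw [Real.dist_eq, sub_zero, abs_of_nonneg dist_nonneg]
      calc dist (f (p i.toNat)) (p (i.toNat + 1)) < 1/(K+1) := hpj K i.toNat (by omega)
        _ < ε := by exact_mod_cast hK
    · rw [Metric.tendsto_nhds]
      intro ε hε
      obtain ⟨K, hK⟩ := exists_nat_one_div_lt hε
      rw [eventually_atBot]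
      refine ⟨-(S' K : ℤ) - 1, fun i hi => ?_⟩
      obtain ⟨e1, e2⟩ := hu_neg_succ i (by omega)
      rw [e1, e2]
      set k : ℕ := (-i).toNat with hk
      have hk1 : S' K + 1 ≤ k := by omega
      rw [Real.dist_eq, sub_zero, abs_of_nonneg dist_nonneg]
      have : dist (f (r ((k-1)+1))) (r (k-1)) < 1/(K+1) := hrj K (k-1) (by omega)
      rw [show (k-1)+1 = k by omega] at this
      calc dist (f (r k)) (r (k - 1)) < 1/(K+1) := this
        _ < ε := by exact_mod_cast hK
  -- omegaZ u = A
  have homega : omegaZ u = A := by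
    apply Set.Subset.antisymm
    · have h1 : omegaZ u ⊆ closure (u '' {n : ℤ | ((0:ℕ) : ℤ) < n}) :=
        Set.iInter_subset _ 0
      refine fun x hx => ?_
      have := h1 hx
      have h2 : closure (u '' {n : ℤ | ((0:ℕ) : ℤ) < n}) ⊆ A := by
        rw [← hcl.closure_eq]
        exact closure_mono (fun z hz => by obtain ⟨n, -, rfl⟩ := hz; exact humem n)
      exact h2 this
    · have hrange : Set.range e ⊆ omegaZ u := by
        rintro x ⟨j, rfl⟩
        refine Set.mem_iInter.mpr fun M => ?_
        apply subset_closure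
        refine ⟨(S (Nat.pair (M+1) j) : ℤ), ?_, ?_⟩
        · have h1 : M + 1 ≤ Nat.pair (M+1) j := Nat.left_le_pair _ _
          have h2 := hSge (Nat.pair (M+1) j)
          simp only [Set.mem_setOf_eq]
          omega
        · rw [hu_nonneg _ (by positivity)]
          rw [Int.toNat_natCast]
          rw [hpt]
          simp [htdef, Nat.unpair_pair]
      intro x hx
      have h3 : A ⊆ closure (omegaZ u) :=
        le_trans hedense (closure_mono hrange)
      rw [(omegaZ_isClosed u).closure_eq] at h3
      exact h3 hx
  -- alphaZ u = A
  have halpha : alphaZ u = A := by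
    apply Set.Subset.antisymm
    · have h1 : alphaZ u ⊆ closure (u '' {n : ℤ | n < -((0:ℕ) : ℤ)}) :=
        Set.iInter_subset _ 0
      refine fun x hx => ?_
      have := h1 hx
      have h2 : closure (u '' {n : ℤ | n < -((0:ℕ) : ℤ)}) ⊆ A := by
        rw [← hcl.closure_eq]
        exact closure_mono (fun z hz => by obtain ⟨n, -, rfl⟩ := hz; exact humem n)
      exact h2 this
    · have hrange : Set.range e ⊆ alphaZ u := by
        rintro x ⟨j, rfl⟩
        refine Set.mem_iInter.mpr fun M => ?_
        apply subset_closure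
        have h1 : M + 1 ≤ Nat.pair (M+1) j := Nat.left_le_pair _ _
        have h2 := hSge' (Nat.pair (M+1) j)
        refine ⟨-(S' (Nat.pair (M+1) j) : ℤ), ?_, ?_⟩
        · simp only [Set.mem_setOf_eq]
          omega
        · rw [hu_neg _ (by omega)]
          rw [show (-(-(S' (Nat.pair (M+1) j) : ℤ))).toNat = S' (Nat.pair (M+1) j) by omega]
          rw [hrt]
          simp [htdef, Nat.unpair_pair]
      intro x hx
      have h3 : A ⊆ closure (alphaZ u) :=
        le_trans hedense (closure_mono hrange)
      rw [(alphaZ_isClosed u).closure_eq] at h3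
      exact h3 hx
  exact ⟨u, hasym, halpha, homega⟩
end construction

theorem stmt11 {X : Type*} [MetricSpace X] [CompactSpace X] (f : X → X)
    (hf : Continuous f) :
    (∀ A : Set X, A.Nonempty → IsClosed A → chainTransitive f A →
      ∃ u : ℤ → X, fullTraj f u ∧ alphaZ u = A ∧ omegaZ u = A) ↔
    (∀ u : ℤ → X, twoSidedAsymptotic f u → alphaZ u = omegaZ u →
      ∃ z : ℤ → X, fullTraj f z ∧ alphaZ z = alphaZ u ∧ omegaZ z = omegaZ u) := by
  constructor
  · intro hP u hasym heq
    obtain ⟨z, hz, hza, hzo⟩ := hP (omegaZ u) (omegaZ_nonempty u) (omegaZ_isClosed u)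
      (omegaZ_chainTransitive hf u hasym.1)
    exact ⟨z, hz, by rw [hza, ← heq], by rw [hzo]⟩
  · intro hS A hne hcl hct
    obtain ⟨u, hasym, halpha, homega⟩ := exists_good_pseudo_orbit f A hne hcl hct
    obtain ⟨z, hz, hza, hzo⟩ := hS u hasym (by rw [halpha, homega])
    exact ⟨z, hz, by rw [hza, halpha], by rw [hzo, homega]⟩
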